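/- Let G be a finite, simple, connected graph on n vertices. Then Σ⁻(G) is a singleton (i.e., every parity signature of G has the same number of negative edges) if and only if G is K_{1,n−1} with n even, or G is K_n. -/

import Mathlib

open scoped Classical

variable {V : Type*}

namespace PSG

/-- A bipartition of the vertex set given by `A` and its complement is
near-balanced (a parity-partition) if the sizes differ by at most 1. -/
def Balanced [Fintype V] [DecidableEq V] (A : Finset V) : Prop :=
  |(A.card : ℤ) - ((Aᶜ : Finset V).card : ℤ)| ≤ 1

/-- The number of edges of `G` between `A` and its complement
(the number of negative edges of the associated parity signature). -/
def cut [Fintype V] [DecidableEq V] (G : SimpleGraph V) [DecidableRel G.Adj]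
    (A : Finset V) : ℕ :=
  ((A ×ˢ (Aᶜ : Finset V)).filter fun p => G.Adj p.1 p.2).card

/-- `Σ⁻(G)`: the set of numbers of negative edges over all parity signatures. -/
def sigmaSet [Fintype V] [DecidableEq V] (G : SimpleGraph V) [DecidableRel G.Adj] :
    Set ℕ :=
  {k | ∃ A : Finset V, Balanced A ∧ k = cut G A}

/-- The rna number `σ⁻(G)`. -/
noncomputable def rna [Fintype V] [DecidableEq V] (G : SimpleGraph V)
    [DecidableRel G.Adj] : ℕ :=
  sInf (sigmaSet G)

/-- `d⁻(v)`: number of negative edges (crossing edges) at `v`. -/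
def dneg [Fintype V] [DecidableEq V] (G : SimpleGraph V) [DecidableRel G.Adj]
    (A : Finset V) (v : V) : ℕ :=
  (Finset.univ.filter fun u => G.Adj v u ∧ ¬(u ∈ A ↔ v ∈ A)).card

/-- `d⁺(v)`: number of positive edges (same-side edges) at `v`. -/
def dpos [Fintype V] [DecidableEq V] (G : SimpleGraph V) [DecidableRel G.Adj]
    (A : Finset V) (v : V) : ℕ :=
  (Finset.univ.filter fun u => G.Adj v u ∧ (u ∈ A ↔ v ∈ A)).card

/-- The sign-difference `dᐃ(v) = d⁻(v) - d⁺(v)`. -/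
def dDelta [Fintype V] [DecidableEq V] (G : SimpleGraph V) [DecidableRel G.Adj]
    (A : Finset V) (v : V) : ℤ :=
  (dneg G A v : ℤ) - (dpos G A v : ℤ)

/-- `f` is a parity-labeling witnessing that `σ` is a parity-signature of `G`. -/
def IsParityLabeling [Fintype V] (G : SimpleGraph V) (σ : V → V → ℤ)
    (f : V ≃ Fin (Fintype.card V)) : Prop :=
  ∀ u v : V, G.Adj u v →
    σ u v = if ((f u : ℕ) % 2 = (f v : ℕ) % 2) then 1 else -1

/-- `(G, σ)` is a parity signed graph. -/
def IsParitySigned [Fintype V] (G : SimpleGraph V) (σ : V → V → ℤ) : Prop :=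
  ∃ f : V ≃ Fin (Fintype.card V), IsParityLabeling G σ f

/-- The sign multiplier of a switch at the vertex set `U`. -/
def sgn [DecidableEq V] (U : Finset V) (v : V) : ℤ := if v ∈ U then -1 else 1

/-- The signature obtained from `σ` by switching at the set of vertices `U`. -/
def switch [DecidableEq V] (σ : V → V → ℤ) (U : Finset V) : V → V → ℤ :=
  fun a b => sgn U a * sgn U b * σ a b

/-- One parity-switch step: switch at a vertex with odd label and one with even label. -/
def ParitySwitchStep [Fintype V] [DecidableEq V] (G : SimpleGraph V)
    (σ σ' : V → V → ℤ) : Prop :=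
  ∃ f : V ≃ Fin (Fintype.card V), IsParityLabeling G σ f ∧
    ∃ u v : V, (f u : ℕ) % 2 = 1 ∧ (f v : ℕ) % 2 = 0 ∧ σ' = switch σ {u, v}

/-- `G` is the star `K_{1,n-1}` on its vertex set. -/
def IsStar (G : SimpleGraph V) : Prop :=
  ∃ c : V, ∀ a b : V, G.Adj a b ↔ ((a = c ∧ b ≠ c) ∨ (b = c ∧ a ≠ c))

/-- The unordered pair `{a,b}` equals the unordered pair `{u,v}`. -/
def pairEq (a b u v : V) : Prop := (a = u ∧ b = v) ∨ (a = v ∧ b = u)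

/-- `G` is the complete graph minus one edge. -/
def IsCompleteMinusEdge (G : SimpleGraph V) : Prop :=
  ∃ u v : V, u ≠ v ∧ ∀ a b : V, G.Adj a b ↔ (a ≠ b ∧ ¬ pairEq a b u v)

/-- `G` is the complete graph minus the three edges of a triangle. -/
def IsCompleteMinusTriangle (G : SimpleGraph V) : Prop :=
  ∃ u v w : V, u ≠ v ∧ u ≠ w ∧ v ≠ w ∧
    ∀ a b : V, G.Adj a b ↔
      (a ≠ b ∧ ¬ (pairEq a b u v ∨ pairEq a b u w ∨ pairEq a b v w))

/-- `G` is the complete graph minus two nonadjacent (disjoint) edges. -/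
def IsCompleteMinusTwoDisjointEdges (G : SimpleGraph V) : Prop :=
  ∃ u v x y : V, u ≠ v ∧ x ≠ y ∧ u ≠ x ∧ u ≠ y ∧ v ≠ x ∧ v ≠ y ∧
    ∀ a b : V, G.Adj a b ↔ (a ≠ b ∧ ¬ (pairEq a b u v ∨ pairEq a b x y))

/-- `G` is the complete graph minus two adjacent edges. -/
def IsCompleteMinusTwoAdjacentEdges (G : SimpleGraph V) : Prop :=
  ∃ u v w : V, u ≠ v ∧ u ≠ w ∧ v ≠ w ∧
    ∀ a b : V, G.Adj a b ↔ (a ≠ b ∧ ¬ (pairEq a b u v ∨ pairEq a b u w))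

/-- `G` is the join `P₂ ∨ I_{n-2}`: an edge joined completely to an independent set. -/
def IsEdgeJoinIndep (G : SimpleGraph V) : Prop :=
  ∃ a b : V, a ≠ b ∧
    ∀ x y : V, G.Adj x y ↔ (x ≠ y ∧ (x = a ∨ x = b ∨ y = a ∨ y = b))

section helpers
variable [Fintype V] [DecidableEq V] (G : SimpleGraph V) [DecidableRel G.Adj]

/-- number of neighbors of `x` in `S` -/
def nd (x : V) (S : Finset V) : ℕ := (S.filter (G.Adj x)).card

/-- adjacency indicator -/
def ei (x y : V) : ℕ := if G.Adj x y then 1 else 0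

lemma ei_comm (x y : V) : ei G x y = ei G y x := by
  unfold ei; simp [G.adj_comm]

lemma ei_le_one (x y : V) : ei G x y ≤ 1 := by
  unfold ei; split <;> omega

lemma ei_eq_one {x y : V} (h : G.Adj x y) : ei G x y = 1 := by simp [ei, h]

lemma ei_eq_zero {x y : V} (h : ¬ G.Adj x y) : ei G x y = 0 := by simp [ei, h]

lemma nd_insert (a u : V) (S : Finset V) (h : u ∉ S) :
    nd G a (insert u S) = nd G a S + ei G a u := by
  unfold nd ei
  rw [Finset.filter_insert]
  split_ifs with h'
  · rw [Finset.card_insert_of_notMem (fun hc => h (Finset.mem_of_mem_filter _ hc))]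
  · simp

lemma nd_erase (a u : V) (S : Finset V) (h : u ∈ S) :
    nd G a S = nd G a (S.erase u) + ei G a u := by
  conv_lhs => rw [← Finset.insert_erase h]
  exact nd_insert G a u _ (Finset.notMem_erase u S)

lemma nd_self_erase (a : V) (S : Finset V) : nd G a (S.erase a) = nd G a S := by
  unfold nd
  rw [Finset.filter_erase, Finset.erase_eq_of_notMem]
  simp [G.irrefl]

lemma sum_ei (u : V) (S : Finset V) : ∑ a ∈ S, ei G a u = nd G u S := by
  unfold nd ei
  rw [Finset.card_filter]
  exact Finset.sum_congr rfl fun a _ => by simp only [G.adj_comm]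

lemma cut_eq_sum (A : Finset V) : cut G A = ∑ a ∈ A, nd G a Aᶜ := by
  unfold cut nd
  rw [Finset.card_eq_sum_card_fiberwise (f := Prod.fst) (t := A)
    (fun p hp => (Finset.mem_product.mp (Finset.mem_filter.mp hp).1).1)]
  refine Finset.sum_congr rfl fun a ha => ?_
  refine Finset.card_bij' (fun p _ => p.2) (fun b _ => (a, b)) ?_ ?_ ?_ ?_
  · intro p hp
    simp only [Finset.mem_filter, Finset.mem_product] at hp ⊢
    obtain ⟨⟨⟨_, h2⟩, h3⟩, h4⟩ := hp
    exact ⟨h2, h4 ▸ h3⟩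
  · intro b hb
    simp only [Finset.mem_filter, Finset.mem_product] at hb ⊢
    exact ⟨⟨⟨ha, hb.1⟩, hb.2⟩, trivial⟩
  · intro p hp
    simp only [Finset.mem_filter] at hp
    exact Prod.ext hp.2.symm rfl
  · intro b _; rfl

lemma cut_erase (A : Finset V) (u : V) (hu : u ∈ A) :
    cut G (A.erase u) + nd G u Aᶜ = cut G A + nd G u (A.erase u) := by
  rw [cut_eq_sum, cut_eq_sum]
  have h1 : ∀ a ∈ A.erase u, nd G a (A.erase u)ᶜ = nd G a Aᶜ + ei G a u := by
    intro a _
    rw [Finset.compl_erase, nd_insert G a u Aᶜ (by simp [hu])]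
  rw [Finset.sum_congr rfl h1, Finset.sum_add_distrib, sum_ei]
  rw [← Finset.add_sum_erase _ _ hu]
  omega

lemma cut_insert (B : Finset V) (z : V) (hz : z ∉ B) :
    cut G B + nd G z Bᶜ = cut G (insert z B) + nd G z B := by
  have h := cut_erase G (insert z B) z (Finset.mem_insert_self z B)
  rw [Finset.erase_insert hz] at h
  rw [Finset.compl_insert] at h
  rw [nd_self_erase] at h
  linarith

lemma cut_swap (A : Finset V) (w z : V) (hw : w ∈ A) (hz : z ∉ A) :
    cut G (insert z (A.erase w)) + nd G z A + nd G w Aᶜ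
      = cut G A + nd G w A + nd G z Aᶜ + 2 * ei G z w := by
  have hzw : z ≠ w := fun h => hz (h ▸ hw)
  have h1 := cut_erase G A w hw
  have h2 := cut_insert G (A.erase w) z (fun h => hz (Finset.mem_of_mem_erase h))
  have h3 : nd G z A = nd G z (A.erase w) + ei G z w := nd_erase G z w A hw
  have h4 : nd G z (A.erase w)ᶜ = nd G z Aᶜ + ei G z w := by
    rw [Finset.compl_erase, nd_insert G z w Aᶜ (by simp [hw])]
  have h5 : nd G w (A.erase w) = nd G w A := nd_self_erase G w A
  omega

lemma balanced_iff (A : Finset V) :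
    Balanced A ↔ (A.card + A.card = Fintype.card V ∨ A.card + A.card = Fintype.card V + 1
      ∨ A.card + A.card + 1 = Fintype.card V) := by
  have hle : A.card ≤ Fintype.card V := by
    simpa using Finset.card_le_univ A
  unfold Balanced
  rw [Finset.card_compl, abs_le]
  omega

lemma balanced_congr {A B : Finset V} (h : A.card = B.card) (hB : Balanced B) :
    Balanced A := by
  rw [balanced_iff] at *
  omega


lemma Eprime (hcut : ∀ A B : Finset V, Balanced A → Balanced B → cut G A = cut G B)
    (A : Finset V) (hA : Balanced A) (w z : V) (hw : w ∈ A) (hz : z ∉ A) :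
    nd G z A + nd G w Aᶜ = nd G w A + nd G z Aᶜ + 2 * ei G z w := by
  have hswap := cut_swap G A w z hw hz
  have hcard : (insert z (A.erase w)).card = A.card := by
    rw [Finset.card_insert_of_notMem (fun h => hz (Finset.mem_of_mem_erase h)),
      Finset.card_erase_of_mem hw]
    have : 1 ≤ A.card := Finset.card_pos.mpr ⟨w, hw⟩
    omega
  have := hcut _ _ (balanced_congr hcard hA) hA
  omega

lemma exists_with (S T : Finset V) (k : ℕ) (hST : Disjoint S T)
    (h1 : S.card ≤ k) (h2 : k + T.card ≤ Fintype.card V) :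
    ∃ A : Finset V, S ⊆ A ∧ Disjoint A T ∧ A.card = k := by
  have hsub : S ⊆ Tᶜ := fun x hx => Finset.mem_compl.mpr (Finset.disjoint_left.mp hST hx)
  have hcard : (k - S.card) + S.card ≤ Tᶜ.card := by
    rw [Finset.card_compl]
    have := Finset.card_le_univ T
    omega
  obtain ⟨A, hSA, hAT, hA⟩ := Finset.exists_subsuperset_card_eq hsub h1 (by omega)
  refine ⟨A, hSA, ?_, by omega⟩
  exact Finset.disjoint_left.mpr fun x hx => Finset.mem_compl.mp (hAT hx)


lemma star_eq (hcut : ∀ A B : Finset V, Balanced A → Balanced B → cut G A = cut G B)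
    (h4 : 4 ≤ Fintype.card V) (heven : Even (Fintype.card V))
    (w z u u' : V) (hwz : w ≠ z) (huw : u ≠ w) (huz : u ≠ z) (hu'w : u' ≠ w)
    (hu'z : u' ≠ z) (huu' : u ≠ u') :
    ei G u w + ei G u' z = ei G u z + ei G u' w := by
  obtain ⟨r, hr⟩ := heven
  -- choose A of size n/2 with w,u ∈ A and z,u' ∉ A
  obtain ⟨A, hSA, hAT, hcardA⟩ := exists_with ({w, u} : Finset V) ({z, u'} : Finset V) r
    (by
      rw [Finset.disjoint_left]
      intro x hx hx'
      simp only [Finset.mem_insert, Finset.mem_singleton] at hx hx'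
      rcases hx with rfl | rfl <;> rcases hx' with rfl | rfl <;> simp_all)
    (by
      have : ({w, u} : Finset V).card ≤ 2 := Finset.card_insert_le _ _ |>.trans (by simp)
      omega)
    (by
      have : ({z, u'} : Finset V).card ≤ 2 := Finset.card_insert_le _ _ |>.trans (by simp)
      omega)
  have hwA : w ∈ A := hSA (by simp)
  have huA : u ∈ A := hSA (by simp)
  have hzA : z ∉ A := fun h => by simpa using Finset.disjoint_left.mp hAT h (by simp)
  have hu'A : u' ∉ A := fun h => by simpa using Finset.disjoint_left.mp hAT h (by simp)
  have hAbal : Balanced A := by rw [balanced_iff]; omega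
  set B := insert u' (A.erase u) with hB
  have hu'eA : u' ∉ A.erase u := fun h => hu'A (Finset.mem_of_mem_erase h)
  have hwB : w ∈ B := Finset.mem_insert_of_mem (Finset.mem_erase.mpr ⟨fun h => huw h.symm, hwA⟩)
  have hzB : z ∉ B := by
    intro h
    rcases Finset.mem_insert.mp h with h | h
    · exact hu'z h.symm
    · exact hzA (Finset.mem_of_mem_erase h)
  have hcardB : B.card = A.card := by
    rw [hB, Finset.card_insert_of_notMem hu'eA, Finset.card_erase_of_mem huA]
    have : 1 ≤ A.card := Finset.card_pos.mpr ⟨u, huA⟩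
    omega
  have hBbal : Balanced B := balanced_congr hcardB hAbal
  have e1 := Eprime G hcut A hAbal w z hwA hzA
  have e2 := Eprime G hcut B hBbal w z hwB hzB
  -- transfer nd over B vs A
  have tB : ∀ x : V, nd G x B + ei G x u = nd G x A + ei G x u' := by
    intro x
    have t1 : nd G x B = nd G x (A.erase u) + ei G x u' := nd_insert G x u' _ hu'eA
    have t2 : nd G x A = nd G x (A.erase u) + ei G x u := nd_erase G x u A huA
    omega
  have hBc : Bᶜ = (insert u Aᶜ).erase u' := by
    rw [hB, Finset.compl_insert, Finset.compl_erase]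
  have tBc : ∀ x : V, nd G x Bᶜ + ei G x u' = nd G x Aᶜ + ei G x u := by
    intro x
    have huc : u ∉ Aᶜ := by simp [huA]
    have hu'c : u' ∈ insert u Aᶜ := Finset.mem_insert_of_mem (by simp [hu'A])
    have t1 : nd G x (insert u Aᶜ) = nd G x Bᶜ + ei G x u' := by
      rw [hBc]; exact nd_erase G x u' _ hu'c
    have t2 : nd G x (insert u Aᶜ) = nd G x Aᶜ + ei G x u := nd_insert G x u _ huc
    omega
  have hw1 := tB w; have hw2 := tBc w; have hz1 := tB z; have hz2 := tBc z
  have key : ei G z u' + ei G w u = ei G w u' + ei G z u := by omega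
  rw [ei_comm G z u', ei_comm G w u, ei_comm G w u', ei_comm G z u] at key
  omega

lemma odd_adj (hcut : ∀ A B : Finset V, Balanced A → Balanced B → cut G A = cut G B)
    (h3 : 3 ≤ Fintype.card V) (hodd : Odd (Fintype.card V))
    (u w z : V) (huw : u ≠ w) (huz : u ≠ z) (hwz : w ≠ z) :
    G.Adj u w ↔ G.Adj u z := by
  obtain ⟨r, hr⟩ := hodd
  -- A of size r+1 with u,w ∈ A, z ∉ A
  obtain ⟨A, hSA, hAT, hcardA⟩ := exists_with ({u, w} : Finset V) ({z} : Finset V) (r + 1)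
    (by
      rw [Finset.disjoint_left]
      intro x hx hx'
      simp only [Finset.mem_insert, Finset.mem_singleton] at hx hx'
      rcases hx with rfl | rfl <;> simp_all)
    (by
      have : ({u, w} : Finset V).card ≤ 2 := Finset.card_insert_le _ _ |>.trans (by simp)
      omega)
    (by simp; omega)
  have huA : u ∈ A := hSA (by simp)
  have hwA : w ∈ A := hSA (by simp)
  have hzA : z ∉ A := fun h => by simpa using Finset.disjoint_left.mp hAT h (by simp)
  have hAbal : Balanced A := by rw [balanced_iff]; omega
  -- erase-step lemma
  have step : ∀ C : Finset V, Balanced C → C.card = r + 1 → u ∈ C →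
      nd G u Cᶜ = nd G u C := by
    intro C hC hcard huC
    have hbal' : Balanced (C.erase u) := by
      rw [balanced_iff]; rw [Finset.card_erase_of_mem huC]; omega
    have hceq := hcut _ _ hbal' hC
    have hce := cut_erase G C u huC
    have := nd_self_erase G u C
    omega
  set B := insert z (A.erase w) with hB
  have hzeA : z ∉ A.erase w := fun h => hzA (Finset.mem_of_mem_erase h)
  have huB : u ∈ B := Finset.mem_insert_of_mem (Finset.mem_erase.mpr ⟨huw, huA⟩)
  have hcardB : B.card = r + 1 := by
    rw [hB, Finset.card_insert_of_notMem hzeA, Finset.card_erase_of_mem hwA]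
    omega
  have hBbal : Balanced B := balanced_congr (by omega : B.card = A.card) hAbal
  have s1 := step A hAbal hcardA huA
  have s2 := step B hBbal hcardB huB
  have tB : nd G u B + ei G u w = nd G u A + ei G u z := by
    have t1 : nd G u B = nd G u (A.erase w) + ei G u z := nd_insert G u z _ hzeA
    have t2 : nd G u A = nd G u (A.erase w) + ei G u w := nd_erase G u w A hwA
    omega
  have tBc : nd G u Bᶜ + ei G u z = nd G u Aᶜ + ei G u w := by
    have hBc : Bᶜ = (insert w Aᶜ).erase z := by
      rw [hB, Finset.compl_insert, Finset.compl_erase]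
    have hwc : w ∉ Aᶜ := by simp [hwA]
    have hzc : z ∈ insert w Aᶜ := Finset.mem_insert_of_mem (by simp [hzA])
    have t1 : nd G u (insert w Aᶜ) = nd G u Bᶜ + ei G u z := by
      rw [hBc]; exact nd_erase G u z _ hzc
    have t2 : nd G u (insert w Aᶜ) = nd G u Aᶜ + ei G u w := nd_insert G u w _ hwc
    omega
  have key : ei G u w = ei G u z := by omega
  unfold ei at key
  split_ifs at key with h1 h2 h2 <;> simp_all

lemma exists_adj (hconn : G.Connected) (h2 : 1 < Fintype.card V) (v : V) :
    ∃ x, G.Adj v x := by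
  have : Nontrivial V := Fintype.one_lt_card_iff_nontrivial.mp h2
  obtain ⟨u, hu⟩ := exists_ne v
  obtain ⟨p⟩ := hconn.preconnected v u
  cases p with
  | nil => exact absurd rfl hu.symm
  | cons h _ => exact ⟨_, h⟩


lemma top_of (hconn : G.Connected) (h3 : 3 ≤ Fintype.card V)
    (hQ : ∀ u w z : V, u ≠ w → u ≠ z → w ≠ z → (G.Adj u w ↔ G.Adj u z)) : G = ⊤ := by
  obtain ⟨x⟩ := hconn.nonempty
  obtain ⟨y, hxy⟩ := exists_adj G hconn (by omega) x
  have hxny : x ≠ y := hxy.ne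
  have c1 : ∀ v : V, v ≠ x → v ≠ y → G.Adj v x ∧ G.Adj v y := by
    intro v hvx hvy
    have h1 : G.Adj x v := (hQ x y v hxny (Ne.symm hvx) (Ne.symm hvy)).mp hxy
    have h2 : G.Adj v y := (hQ v x y hvx hvy hxny).mp h1.symm
    exact ⟨h1.symm, h2⟩
  ext a b
  simp only [SimpleGraph.top_adj]
  constructor
  · exact fun h => h.ne
  · intro hab
    by_cases hax : a = x
    · subst hax
      by_cases hby : b = y
      · subst hby; exact hxy
      · exact ((c1 b (Ne.symm hab) hby).1).symm
    by_cases hay : a = y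
    · subst hay
      by_cases hbx : b = x
      · subst hbx; exact hxy.symm
      · exact ((c1 b hbx (Ne.symm hab)).2).symm
    have ha := c1 a hax hay
    by_cases hbx : b = x
    · subst hbx; exact ha.1
    by_cases hby : b = y
    · subst hby; exact ha.2
    have hb := c1 b hbx hby
    exact ((hQ b a x (Ne.symm hab) hbx hax).mpr hb.1).symm

lemma isStar_of (hconn : G.Connected) (h3 : 3 ≤ Fintype.card V)
    (hS : ∀ w z u u' : V, w ≠ z → u ≠ w → u ≠ z → u' ≠ w → u' ≠ z → u ≠ u' →
      ei G u w + ei G u' z = ei G u z + ei G u' w)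
    (w z u0 : V) (hwz : w ≠ z) (h0w : u0 ≠ w) (h0z : u0 ≠ z)
    (hadj : G.Adj u0 z) (hnadj : ¬ G.Adj u0 w) : IsStar G := by
  have s1 : ∀ u : V, u ≠ w → u ≠ z → G.Adj u z ∧ ¬ G.Adj u w := by
    intro u huw huz
    by_cases h : u = u0
    · subst h; exact ⟨hadj, hnadj⟩
    · have h := hS w z u u0 hwz huw huz h0w h0z h
      rw [ei_eq_one G hadj, ei_eq_zero G hnadj] at h
      have e1 := ei_le_one G u w
      have e2 := ei_le_one G u z
      constructor
      · by_contra hc; rw [ei_eq_zero G hc] at h; omega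
      · intro hc; rw [ei_eq_one G hc] at h; omega
  have s2 : G.Adj w z := by
    obtain ⟨x, hx⟩ := exists_adj G hconn (by omega) w
    by_cases hxz : x = z
    · exact hxz ▸ hx
    · exact absurd hx.symm (s1 x hx.ne' hxz).2
  have s3 : ∀ u u' : V, u ≠ u' → u ≠ w → u ≠ z → u' ≠ w → u' ≠ z → ¬ G.Adj u u' := by
    intro u u' huu' huw huz hu'w hu'z
    have h := hS u w z u' huw (Ne.symm huz) (Ne.symm hwz) (Ne.symm huu') hu'w (Ne.symm hu'z)
    rw [ei_eq_one G ((s1 u huw huz).1).symm, ei_eq_zero G (s1 u' hu'w hu'z).2,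
      ei_eq_one G s2.symm] at h
    have := ei_le_one G u' u
    intro hc
    rw [ei_eq_one G hc.symm] at h
    omega
  refine ⟨z, fun a b => ?_⟩
  constructor
  · intro hab
    by_cases haz : a = z
    · exact Or.inl ⟨haz, fun h => hab.ne (haz.trans h.symm)⟩
    by_cases hbz : b = z
    · exact Or.inr ⟨hbz, haz⟩
    exfalso
    by_cases haw : a = w
    · by_cases hbw : b = w
      · exact hab.ne (haw.trans hbw.symm)
      · exact (s1 b hbw hbz).2 (by rw [← haw]; exact hab.symm)
    by_cases hbw : b = w
    · exact (s1 a haw haz).2 (by rw [← hbw]; exact hab)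
    · exact s3 a b hab.ne haw haz hbw hbz hab
  · rintro (⟨rfl, hbz⟩ | ⟨rfl, haz⟩)
    · by_cases hbw : b = w
      · rw [hbw]; exact s2.symm
      · exact ((s1 b hbw hbz).1).symm
    · by_cases haw : a = w
      · rw [haw]; exact s2
      · exact (s1 a haw haz).1


lemma star_cut (c : V) (hc : ∀ a b : V, G.Adj a b ↔ ((a = c ∧ b ≠ c) ∨ (b = c ∧ a ≠ c)))
    (A : Finset V) (hA : Balanced A) (heven : Even (Fintype.card V)) :
    cut G A = Fintype.card V / 2 := by
  obtain ⟨r, hr⟩ := heven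
  have hcards : A.card = Fintype.card V / 2 ∧ Aᶜ.card = Fintype.card V / 2 := by
    rw [balanced_iff] at hA
    have := Finset.card_compl A (α := V)
    omega
  rw [cut_eq_sum]
  by_cases hcA : c ∈ A
  · rw [Finset.sum_eq_single c]
    · unfold nd
      rw [Finset.filter_true_of_mem]
      · exact hcards.2
      · intro b hb
        rw [hc]
        exact Or.inl ⟨rfl, fun h => (Finset.mem_compl.mp hb) (h ▸ hcA)⟩
    · intro a _ hac
      unfold nd
      rw [Finset.card_eq_zero, Finset.filter_eq_empty_iff]
      intro b hb hadj
      rcases (hc a b).mp hadj with ⟨h1, _⟩ | ⟨h1, _⟩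
      · exact hac h1
      · exact (Finset.mem_compl.mp hb) (h1 ▸ hcA)
    · intro h; exact absurd hcA h
  · have h1 : ∀ a ∈ A, nd G a Aᶜ = 1 := by
      intro a ha
      have hac : a ≠ c := fun h => hcA (h ▸ ha)
      unfold nd
      rw [Finset.card_eq_one]
      refine ⟨c, ?_⟩
      ext b
      simp only [Finset.mem_filter, Finset.mem_singleton, Finset.mem_compl]
      constructor
      · rintro ⟨hb, hadj⟩
        rcases (hc a b).mp hadj with ⟨h1, _⟩ | ⟨h1, _⟩
        · exact absurd h1 hac
        · exact h1
      · rintro rfl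
        exact ⟨hcA, (hc a b).mpr (Or.inr ⟨rfl, hac⟩)⟩
    rw [Finset.sum_congr rfl h1, Finset.sum_const, smul_eq_mul, mul_one]
    exact hcards.1

lemma top_cut (hG : ∀ a b : V, G.Adj a b ↔ a ≠ b) (A : Finset V) :
    cut G A = A.card * Aᶜ.card := by
  rw [cut_eq_sum]
  have h1 : ∀ a ∈ A, nd G a Aᶜ = Aᶜ.card := by
    intro a ha
    unfold nd
    rw [Finset.filter_true_of_mem]
    intro b hb
    exact (hG a b).mpr fun h => (Finset.mem_compl.mp hb) (h ▸ ha)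
  rw [Finset.sum_congr rfl h1, Finset.sum_const, smul_eq_mul]

end helpers

/-- `Σ⁻(G)` is a singleton iff `G` is `K_{1,n-1}` with `n` even,
or `G` is complete. -/
theorem stmt6 [Fintype V] [DecidableEq V] (G : SimpleGraph V) [DecidableRel G.Adj]
    (hconn : G.Connected) :
    (∃ k : ℕ, sigmaSet G = {k}) ↔
      ((IsStar G ∧ Even (Fintype.card V)) ∨ G = ⊤) := by
  constructor
  · rintro ⟨k, hk⟩
    have hcut : ∀ A B : Finset V, Balanced A → Balanced B → cut G A = cut G B := by
      intro A B hA hB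
      have h1 : cut G A ∈ sigmaSet G := ⟨A, hA, rfl⟩
      have h2 : cut G B ∈ sigmaSet G := ⟨B, hB, rfl⟩
      rw [hk, Set.mem_singleton_iff] at h1 h2
      omega
    by_cases hsmall : Fintype.card V ≤ 1
    · right
      have : Subsingleton V := Fintype.card_le_one_iff_subsingleton.mp hsmall
      ext a b
      rw [Subsingleton.elim a b]
      simp
    push_neg at hsmall
    by_cases hn2 : Fintype.card V = 2
    · right
      ext a b
      simp only [SimpleGraph.top_adj]
      constructor
      · exact fun h => h.ne
      · intro hab
        obtain ⟨x, hx⟩ := exists_adj G hconn hsmall a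
        by_cases hxb : x = b
        · exact hxb ▸ hx
        · exfalso
          have hcard3 : ({a, b, x} : Finset V).card = 3 := by
            rw [Finset.card_insert_of_notMem (by
                simp only [Finset.mem_insert, Finset.mem_singleton]
                push_neg
                exact ⟨hab, hx.ne⟩),
              Finset.card_insert_of_notMem (by
                simp only [Finset.mem_singleton]
                exact fun h => hxb h.symm),
              Finset.card_singleton]
          have := Finset.card_le_univ ({a, b, x} : Finset V)
          omega
    have h3 : 3 ≤ Fintype.card V := by omega
    rcases Nat.even_or_odd (Fintype.card V) with he | ho
    · have h4 : 4 ≤ Fintype.card V := by obtain ⟨r, hr⟩ := he; omega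
      have hS := star_eq G hcut h4 he
      by_cases hex : ∃ w z u0 : V, w ≠ z ∧ u0 ≠ w ∧ u0 ≠ z ∧
          ((G.Adj u0 z ∧ ¬ G.Adj u0 w) ∨ (G.Adj u0 w ∧ ¬ G.Adj u0 z))
      · left
        obtain ⟨w, z, u0, hwz, h0w, h0z, hcase⟩ := hex
        refine ⟨?_, he⟩
        rcases hcase with ⟨ha, hn⟩ | ⟨ha, hn⟩
        · exact isStar_of G hconn h3 hS w z u0 hwz h0w h0z ha hn
        · exact isStar_of G hconn h3 hS z w u0 (Ne.symm hwz) h0z h0w ha hn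
      · right
        push_neg at hex
        apply top_of G hconn h3
        intro u w z huw huz hwz
        have := hex w z u hwz huw huz
        tauto
    · right
      exact top_of G hconn h3 fun u w z h1 h2 h3' => odd_adj G hcut h3 ho u w z h1 h2 h3'
  · rintro (⟨⟨c, hc⟩, heven⟩ | rfl)
    · refine ⟨Fintype.card V / 2, ?_⟩
      ext x
      simp only [sigmaSet, Set.mem_setOf_eq, Set.mem_singleton_iff]
      constructor
      · rintro ⟨A, hA, rfl⟩
        exact star_cut G c hc A hA heven
      · intro hx
        obtain ⟨A, -, hAcard⟩ := Finset.exists_subset_card_eq (s := (Finset.univ : Finset V)) (n := Fintype.card V / 2)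
          (by rw [Finset.card_univ]; omega)
        have hA : Balanced A := by
          rw [balanced_iff, hAcard]
          obtain ⟨r, hr⟩ := heven
          omega
        exact ⟨A, hA, by rw [star_cut G c hc A hA heven, hx]⟩
    · have hG : ∀ a b : V, (⊤ : SimpleGraph V).Adj a b ↔ a ≠ b := fun a b => by simp
      refine ⟨(Fintype.card V / 2) * ((Fintype.card V + 1) / 2), ?_⟩
      ext x
      simp only [sigmaSet, Set.mem_setOf_eq, Set.mem_singleton_iff]
      have hval : ∀ A : Finset V, Balanced A →
          cut ⊤ A = (Fintype.card V / 2) * ((Fintype.card V + 1) / 2) := by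
        intro A hA
        rw [top_cut _ hG A]
        have hcc := Finset.card_compl A (α := V)
        rw [balanced_iff] at hA
        have : (A.card = Fintype.card V / 2 ∧ Aᶜ.card = (Fintype.card V + 1) / 2) ∨
            (A.card = (Fintype.card V + 1) / 2 ∧ Aᶜ.card = Fintype.card V / 2) := by omega
        rcases this with ⟨h1, h2⟩ | ⟨h1, h2⟩ <;> rw [h1, h2]
        exact mul_comm _ _
      constructor
      · rintro ⟨A, hA, rfl⟩
        exact hval A hA
      · intro hx
        obtain ⟨A, -, hAcard⟩ := Finset.exists_subset_card_eq (s := (Finset.univ : Finset V)) (n := Fintype.card V / 2)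
          (by rw [Finset.card_univ]; omega)
        have hA : Balanced A := by rw [balanced_iff, hAcard]; omega
        exact ⟨A, hA, by rw [hval A hA, hx]⟩


end PSG
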